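/- Let F be a function holomorphic on the open horizontal strip S = {z ∈ ℂ : 0 < Im z < α} and continuous on its closure, and suppose F vanishes on a nonempty open interval of the real axis. Then F vanishes identically on the closed strip. -/

import Mathlib

open Complex Set Filter Metric Bornology Topology

set_option maxHeartbeats 2000000 in
/-- If `F` is holomorphic on the open strip `{0 < Im z < α}`, continuous on its
closure, and vanishes on a nonempty open interval `(a, b)` of the real axis, then `F` vanishes
identically on the closed strip. -/
theorem stmt_12 (α : ℝ) (hα : 0 < α) (F : ℂ → ℂ)
    (hd : DifferentiableOn ℂ F {z : ℂ | 0 < z.im ∧ z.im < α})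
    (hc : ContinuousOn F (closure {z : ℂ | 0 < z.im ∧ z.im < α}))
    (a b : ℝ) (hab : a < b)
    (hvanish : ∀ x : ℝ, x ∈ Set.Ioo a b → F x = 0) :
    ∀ z ∈ closure {z : ℂ | 0 < z.im ∧ z.im < α}, F z = 0 := by
  set S : Set ℂ := {z : ℂ | 0 < z.im ∧ z.im < α} with hSdef
  have hSopen : IsOpen S := by
    have : S = Complex.im ⁻¹' (Set.Ioo 0 α) := rfl
    rw [this]
    exact isOpen_Ioo.preimage Complex.continuous_im
  -- points of the closed strip are in the closure
  have hmemcl : ∀ z : ℂ, 0 ≤ z.im → z.im ≤ α → z ∈ closure S := by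
    intro z h0 h1
    have hy : Filter.Tendsto (fun n : ℕ => z.im + (α/2 - z.im) * (1/(n+1))) Filter.atTop (nhds z.im) := by
      have := (tendsto_one_div_add_atTop_nhds_zero_nat).const_mul (α/2 - z.im)
      simpa using (this.const_add z.im)
    have hf : Filter.Tendsto (fun n : ℕ => (↑z.re + ↑(z.im + (α/2 - z.im) * (1/(n+1))) * I : ℂ))
        Filter.atTop (nhds z) := by
      have : Filter.Tendsto (fun n : ℕ => ((z.im + (α/2 - z.im) * (1/(n+1)) : ℝ) : ℂ))
          Filter.atTop (nhds (↑z.im : ℂ)) := Complex.continuous_ofReal.continuousAt.tendsto.comp hy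
      have h2 := (this.mul_const I).const_add (↑z.re : ℂ)
      simpa [Complex.re_add_im] using h2
    refine mem_closure_of_tendsto hf (Filter.Eventually.of_forall (fun n => ?_))
    have hn0 : (0:ℝ) < 1/((n:ℝ)+1) := by positivity
    have hn1 : 1/((n:ℝ)+1) ≤ 1 := by
      rw [div_le_one (by positivity)]
      simp [Nat.cast_nonneg]
    constructor
    · simp only [Complex.add_im, Complex.ofReal_re, Complex.mul_im, Complex.I_im, Complex.I_re,
        Complex.ofReal_im, Complex.ofReal_re]
      have : z.im + (α/2 - z.im) * (1/(n+1)) = (1 - 1/(n+1)) * z.im + (1/(n+1)) * (α/2) := by ring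
      rw [this]
      have : (0:ℝ) < (1/((n:ℝ)+1)) * (α/2) := by positivity
      nlinarith
    · simp only [Complex.add_im, Complex.ofReal_re, Complex.mul_im, Complex.I_im, Complex.I_re,
        Complex.ofReal_im, Complex.ofReal_re]
      have : z.im + (α/2 - z.im) * (1/(n+1)) = (1 - 1/(n+1)) * z.im + (1/(n+1)) * (α/2) := by ring
      rw [this]
      nlinarith
  -- constants
  have hd0 : (0:ℝ) < b - a := sub_pos.mpr hab
  set a₁ : ℝ := a + (b-a)/4 with ha₁
  set b₁ : ℝ := b - (b-a)/4 with hb₁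
  set a₂ : ℝ := a + 3*(b-a)/8 with ha₂
  set b₂ : ℝ := b - 3*(b-a)/8 with hb₂
  set c : ℝ := α/2 with hcdef
  have hc0 : 0 < c := by positivity
  have hcα : c < α := by simp [hcdef]; linarith
  have haa₁ : a < a₁ := by simp [ha₁]; linarith
  have ha₁a₂ : a₁ < a₂ := by simp [ha₁, ha₂]; linarith
  have ha₂b₂ : a₂ < b₂ := by simp [ha₂, hb₂]; linarith
  have hb₂b₁ : b₂ < b₁ := by simp [hb₂, hb₁]; linarith
  have hb₁b : b₁ < b := by simp [hb₁]; linarith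
  -- the rectangle
  set U : Set ℂ := {z : ℂ | a₁ < z.re ∧ z.re < b₁ ∧ 0 < z.im ∧ z.im < c} with hUdef
  set Q : Set ℂ := {z : ℂ | a₁ ≤ z.re ∧ z.re ≤ b₁ ∧ 0 ≤ z.im ∧ z.im ≤ c} with hQdef
  have hUopen : IsOpen U := by
    have : U = Complex.re ⁻¹' (Set.Ioo a₁ b₁) ∩ Complex.im ⁻¹' (Set.Ioo 0 c) := by
      ext z; simp [hUdef, Set.mem_setOf_eq, and_assoc, and_comm, and_left_comm]
    rw [this]
    exact ((isOpen_Ioo.preimage Complex.continuous_re)).inter (isOpen_Ioo.preimage Complex.continuous_im)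
  have hQclosed : IsClosed Q := by
    have : Q = Complex.re ⁻¹' (Set.Icc a₁ b₁) ∩ Complex.im ⁻¹' (Set.Icc 0 c) := by
      ext z; simp [hQdef, Set.mem_setOf_eq, and_assoc, and_comm, and_left_comm]
    rw [this]
    exact ((isClosed_Icc.preimage Complex.continuous_re)).inter (isClosed_Icc.preimage Complex.continuous_im)
  have hQbdd : IsBounded Q := by
    apply (Metric.isBounded_closedBall (x := (0:ℂ)) (r := |a₁| + |b₁| + c)).subset
    intro z hz
    obtain ⟨h1, h2, h3, h4⟩ := hz
    rw [Metric.mem_closedBall, dist_zero_right]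
    calc ‖z‖ ≤ |z.re| + |z.im| := Complex.norm_le_abs_re_add_abs_im z
    _ ≤ (|a₁| + |b₁|) + c := by
        gcongr ?_ + ?_
        · rcases le_or_gt 0 z.re with h|h
          · rw [_root_.abs_of_nonneg h]
            have := le_abs_self b₁
            have := abs_nonneg a₁
            linarith
          · rw [_root_.abs_of_neg h]
            have := neg_abs_le a₁
            have := abs_nonneg b₁
            linarith
        · rw [_root_.abs_of_nonneg h3]; exact h4
  have hQcomp : IsCompact Q := Metric.isCompact_of_isClosed_isBounded hQclosed hQbdd
  have hUQ : U ⊆ Q := fun z hz => ⟨hz.1.le, hz.2.1.le, hz.2.2.1.le, hz.2.2.2.le⟩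
  have hclosUQ : closure U ⊆ Q := closure_minimal hUQ hQclosed
  have hUS : U ⊆ S := fun z hz => ⟨hz.2.2.1, hz.2.2.2.trans hcα⟩
  have hQclosS : Q ⊆ closure S := fun z hz => hmemcl z hz.2.2.1 (hz.2.2.2.trans hcα.le)
  -- the harmonic measure gadget
  set r : ℂ → ℂ := fun z => (z - (b₂:ℂ)) / (z - (a₂:ℂ)) with hrdef
  set θ : ℂ → ℝ := fun z => (r z).arg with hθdef
  have him_r : ∀ z : ℂ, (r z).im = (b₂ - a₂) * z.im / Complex.normSq (z - (a₂:ℂ)) := by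
    intro z
    simp only [hrdef, Complex.div_im, Complex.sub_im, Complex.sub_re, Complex.ofReal_im,
      Complex.ofReal_re]
    ring
  have hne_a₂ : ∀ z : ℂ, z.im ≠ 0 → z - (a₂:ℂ) ≠ 0 := by
    intro z hz h0
    have := congrArg Complex.im h0
    simp at this
    exact hz this
  have him_r_nonneg : ∀ z : ℂ, 0 ≤ z.im → 0 ≤ (r z).im := by
    intro z hz
    rw [him_r]
    exact div_nonneg (mul_nonneg (by linarith) hz) (Complex.normSq_nonneg _)
  have him_r_pos : ∀ z : ℂ, 0 < z.im → 0 < (r z).im := by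
    intro z hz
    rw [him_r]
    exact div_pos (mul_pos (by linarith) hz) (Complex.normSq_pos.mpr (hne_a₂ z hz.ne'))
  have hr_real : ∀ x : ℝ, r x = (((x - b₂)/(x - a₂) : ℝ) : ℂ) := by
    intro x
    simp only [hrdef]
    push_cast
    ring
  have hreal : ∀ z : ℂ, z.im = 0 → z = ((z.re : ℝ) : ℂ) := by
    intro z hz
    apply Complex.ext <;> simp [hz]
  -- θ bounds
  have hθ_le_pi : ∀ z : ℂ, θ z ≤ Real.pi := fun z => Complex.arg_le_pi _
  -- K : the three far edges
  set K : Set ℂ := Q ∩ {z : ℂ | z.re = a₁ ∨ z.re = b₁ ∨ z.im = c} with hKdef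
  have hKcomp : IsCompact K := by
    apply hQcomp.inter_right
    exact (isClosed_eq Complex.continuous_re continuous_const).union
      ((isClosed_eq Complex.continuous_re continuous_const).union
        (isClosed_eq Complex.continuous_im continuous_const))
  have hKpt : ((a₁:ℝ) : ℂ) + (c:ℝ) * I ∈ K := by
    constructor
    · refine ⟨?_, ?_, ?_, ?_⟩ <;>
        simp [Complex.add_re, Complex.add_im, Complex.ofReal_re, Complex.ofReal_im,
          Complex.mul_re, Complex.mul_im, Complex.I_re, Complex.I_im] <;> linarith
    · left
      simp [Complex.add_re, Complex.ofReal_re, Complex.mul_re, Complex.I_re, Complex.I_im]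
  -- key facts on K
  have hKfacts : ∀ z ∈ K, r z ∈ Complex.slitPlane ∧ θ z < Real.pi := by
    intro z hz
    obtain ⟨hzQ, hzE⟩ := hz
    rcases lt_or_eq_of_le hzQ.2.2.1 with him | him
    · constructor
      · exact Or.inr (him_r_pos z him).ne'
      · refine lt_of_le_of_ne (hθ_le_pi z) (fun hpi => ?_)
        have := (Complex.arg_eq_pi_iff.mp hpi).2
        exact absurd this (him_r_pos z him).ne'
    · -- z is real, on the bottom corners: re = a₁ or b₁
      have hre : z.re = a₁ ∨ z.re = b₁ := by
        rcases hzE with h|h|h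
        · exact Or.inl h
        · exact Or.inr h
        · exfalso; rw [← h] at hc0; rw [← him] at hc0; exact lt_irrefl _ hc0
      have hzr : z = ((z.re : ℝ) : ℂ) := hreal z him.symm
      have hratpos : 0 < (z.re - b₂)/(z.re - a₂) := by
        rcases hre with h|h
        · rw [h]
          apply div_pos_of_neg_of_neg <;> linarith
        · rw [h]
          apply div_pos <;> linarith
      have hrz : r z = (((z.re - b₂)/(z.re - a₂) : ℝ) : ℂ) := by
        conv_lhs => rw [hzr]
        rw [hr_real]
      constructor
      · rw [hrz]; exact Complex.ofReal_mem_slitPlane.mpr hratpos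
      · have : θ z = 0 := by
          simp only [hθdef]; rw [hrz]
          exact Complex.arg_ofReal_of_nonneg hratpos.le
        rw [this]; exact Real.pi_pos
  -- continuity helpers
  have hr_contAt : ∀ z : ℂ, z - (a₂:ℂ) ≠ 0 → ContinuousAt r z := by
    intro z h
    exact ContinuousAt.div (by fun_prop) (by fun_prop) h
  have hden_of_slit : ∀ z : ℂ, r z ∈ Complex.slitPlane → z - (a₂:ℂ) ≠ 0 := by
    intro z hs h0
    apply Complex.slitPlane_ne_zero hs
    simp only [hrdef, h0, div_zero]
  have hθ_contAt : ∀ z : ℂ, r z ∈ Complex.slitPlane → ContinuousAt θ z := by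
    intro z hs
    exact (Complex.continuousAt_arg hs).comp (hr_contAt z (hden_of_slit z hs))
  -- the maximum of θ on K
  obtain ⟨ζ, hζK, hζmax⟩ := hKcomp.exists_isMaxOn ⟨_, hKpt⟩
    (fun z hz => (hθ_contAt z (hKfacts z hz).1).continuousWithinAt)
  set m : ℝ := θ ζ with hmdef
  have hmπ : m < Real.pi := (hKfacts ζ hζK).2
  have hKle : ∀ z ∈ K, θ z ≤ m := fun z hz => hζmax hz
  -- bound for F on Q
  obtain ⟨M, hM⟩ := hQcomp.exists_bound_of_continuousOn (hc.mono hQclosS)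
  have hM0 : 0 ≤ M := (norm_nonneg _).trans (hM _ hKpt.1)
  -- the auxiliary functions
  set H : ℕ → ℂ → ℂ := fun n z => F z * Complex.exp (-(n:ℂ) * I * Complex.log (r z)) with hHdef
  have hnorm : ∀ (n : ℕ) (z : ℂ), ‖H n z‖ = ‖F z‖ * Real.exp (n * θ z) := by
    intro n z
    simp only [hHdef]
    rw [norm_mul]
    congr 1
    rw [Complex.norm_exp]
    congr 1
    have : (-(n:ℂ) * I * Complex.log (r z)).re = (n:ℝ) * (Complex.log (r z)).im := by
      simp [Complex.mul_re, Complex.mul_im]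
    rw [this, Complex.log_im]
  -- frontier classification
  have hfront : frontier U ⊆ {z : ℂ | z ∈ Q ∧ z.im = 0} ∪ K := by
    intro z hz
    rw [hUopen.frontier_eq] at hz
    have hzQ := hclosUQ hz.1
    by_cases him : z.im = 0
    · exact Or.inl ⟨hzQ, him⟩
    · right
      refine ⟨hzQ, ?_⟩
      have him' : 0 < z.im := lt_of_le_of_ne hzQ.2.2.1 (Ne.symm him)
      have hUnot := hz.2
      simp only [hUdef, Set.mem_setOf_eq, not_and, not_lt] at hUnot
      rcases eq_or_lt_of_le hzQ.1 with h1|h1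
      · exact Or.inl h1.symm
      rcases eq_or_lt_of_le hzQ.2.1 with h2|h2
      · exact Or.inr (Or.inl h2)
      rcases eq_or_lt_of_le hzQ.2.2.2 with h3|h3
      · exact Or.inr (Or.inr h3)
      exact absurd (hUnot h1 h2 him') (not_le.mpr h3)
  -- bottom vanishing
  have hbottom : ∀ z : ℂ, z ∈ Q → z.im = 0 → F z = 0 := by
    intro z hzQ him
    rw [hreal z him]
    refine hvanish _ ⟨?_, ?_⟩
    · linarith [hzQ.1]
    · linarith [hzQ.2.1]
  -- differentiability and continuity of H n
  have hHdiffcl : ∀ n : ℕ, DiffContOnCl ℂ (H n) U := by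
    intro n
    constructor
    · intro z hz
      have hzim : 0 < z.im := hz.2.2.1
      have hden : z - (a₂:ℂ) ≠ 0 := hne_a₂ z hzim.ne'
      have hslit : r z ∈ Complex.slitPlane := Or.inr (him_r_pos z hzim).ne'
      have hrd : DifferentiableAt ℂ r z := by
        simp only [hrdef]
        exact DifferentiableAt.div (differentiableAt_id.sub (differentiableAt_const _))
          (differentiableAt_id.sub (differentiableAt_const _)) hden
      have hlog : DifferentiableAt ℂ (fun ζ => Complex.log (r ζ)) z :=
        (Complex.differentiableAt_log hslit).comp z hrd
      exact ((hd.differentiableAt (hSopen.mem_nhds (hUS hz))).mul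
        ((hlog.const_mul _).cexp)).differentiableWithinAt
    · intro z hz
      have hzQ := hclosUQ hz
      by_cases hztwo : z = ((a₂:ℝ):ℂ) ∨ z = ((b₂:ℝ):ℂ)
      · -- squeeze argument near the two singular points
        have hFz : F z = 0 := by
          rcases hztwo with h|h <;> rw [h] <;>
            exact hvanish _ ⟨by linarith, by linarith⟩
        have hHz : H n z = 0 := by simp [hHdef, hFz]
        have hcF : ContinuousWithinAt F (closure U) z := (hc.mono (closure_mono hUS)) z hz
        have htend : Filter.Tendsto (fun ζ => ‖F ζ‖ * Real.exp (n * Real.pi))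
            (nhdsWithin z (closure U)) (nhds 0) := by
          have h1 : Filter.Tendsto (fun ζ => ‖F ζ‖) (nhdsWithin z (closure U)) (nhds 0) := by
            have h2 : Filter.Tendsto (fun ζ => ‖F ζ‖) (nhdsWithin z (closure U)) (nhds ‖F z‖) :=
              hcF.norm.tendsto
            rwa [hFz, norm_zero] at h2
          simpa using h1.mul_const (Real.exp (n * Real.pi))
        have : Filter.Tendsto (H n) (nhdsWithin z (closure U)) (nhds 0) := by
          apply squeeze_zero_norm' ?_ htend
          filter_upwards [self_mem_nhdsWithin] with ζ hζ
          rw [hnorm]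
          have hle : (n:ℝ) * θ ζ ≤ (n:ℝ) * Real.pi :=
            mul_le_mul_of_nonneg_left (hθ_le_pi ζ) (Nat.cast_nonneg n)
          exact mul_le_mul_of_nonneg_left (Real.exp_le_exp.mpr hle) (norm_nonneg _)
        rw [ContinuousWithinAt, hHz]
        exact this
      · push_neg at hztwo
        have hden : z - (a₂:ℂ) ≠ 0 := sub_ne_zero.mpr hztwo.1
        have hrz_ne : r z ≠ 0 := by
          simp only [hrdef]
          exact div_ne_zero (sub_ne_zero.mpr hztwo.2) hden
        have hrcont : ContinuousAt r z := hr_contAt z hden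
        have hlogcont : ContinuousWithinAt (fun ζ => Complex.log (r ζ)) (closure U) z := by
          by_cases hslit : r z ∈ Complex.slitPlane
          · exact ((continuousAt_clog hslit).comp hrcont).continuousWithinAt
          · have hrim : (r z).im = 0 := by
              by_contra hne
              exact hslit (Or.inr hne)
            have hrre : (r z).re < 0 := by
              rcases lt_trichotomy ((r z).re) 0 with h|h|h
              · exact h
              · exact absurd (Complex.ext (by simpa using h) (by simpa using hrim)) hrz_ne
              · exact absurd (Or.inl h) hslit
            exact (Complex.continuousWithinAt_log_of_re_neg_of_im_zero hrre hrim).comp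
              hrcont.continuousWithinAt
              (fun ζ hζ => him_r_nonneg ζ (hclosUQ hζ).2.2.1)
        have hFcont : ContinuousWithinAt F (closure U) z := (hc.mono (closure_mono hUS)) z hz
        exact hFcont.mul
          (Complex.continuous_exp.continuousAt.comp_continuousWithinAt (hlogcont.const_mul _))
  -- the main estimate via the maximum principle
  have hEst : ∀ (n : ℕ), ∀ z₀ ∈ U, ‖F z₀‖ * Real.exp (n * θ z₀) ≤ M * Real.exp (n * m) := by
    intro n z₀ hz₀
    rw [← hnorm n z₀]
    refine Complex.norm_le_of_forall_mem_frontier_norm_le (hQbdd.subset hUQ) (hHdiffcl n) ?_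
      (subset_closure hz₀)
    intro z hz
    rcases hfront hz with ⟨hzQ, him⟩ | hzK
    · have hF0 : F z = 0 := hbottom z hzQ him
      rw [hnorm, hF0, norm_zero, zero_mul]
      positivity
    · rw [hnorm]
      exact mul_le_mul (hM z hzK.1)
        (Real.exp_le_exp.mpr (mul_le_mul_of_nonneg_left (hKle z hzK) (Nat.cast_nonneg n)))
        (Real.exp_pos _).le hM0
  -- vanishing on the good open set
  have hW0 : ∀ z₀ ∈ U, m < θ z₀ → F z₀ = 0 := by
    intro z₀ hz₀U hz₀θ
    have key : ∀ n : ℕ, ‖F z₀‖ ≤ M * Real.exp (m - θ z₀) ^ n := by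
      intro n
      have h1 := hEst n z₀ hz₀U
      have h2 : ‖F z₀‖ ≤ M * Real.exp ((n:ℝ) * m) / Real.exp ((n:ℝ) * θ z₀) :=
        (le_div_iff₀ (Real.exp_pos _)).mpr h1
      have h3 : M * Real.exp ((n:ℝ) * m) / Real.exp ((n:ℝ) * θ z₀)
          = M * Real.exp (m - θ z₀) ^ n := by
        rw [mul_div_assoc, ← Real.exp_sub, ← Real.exp_nat_mul]
        congr 1
        ring
      rwa [h3] at h2
    have hlt1 : Real.exp (m - θ z₀) < 1 := by
      rw [← Real.exp_zero]
      exact Real.exp_lt_exp.mpr (by linarith)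
    have htend : Filter.Tendsto (fun n : ℕ => M * Real.exp (m - θ z₀) ^ n)
        Filter.atTop (nhds 0) := by
      have := (tendsto_pow_atTop_nhds_zero_of_lt_one (Real.exp_nonneg _) hlt1).const_mul M
      simpa using this
    have := ge_of_tendsto' htend key
    exact norm_le_zero_iff.mp this
  -- the good open set is nonempty
  set x₀ : ℝ := (a + b)/2 with hx₀def
  have hx₀ : a₂ < x₀ ∧ x₀ < b₂ := by constructor <;> simp [ha₂, hb₂, hx₀def] <;> linarith
  have hx₀ab : a₁ < x₀ ∧ x₀ < b₁ := ⟨ha₁a₂.trans hx₀.1, hx₀.2.trans hb₂b₁⟩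
  have hρneg : (x₀ - b₂)/(x₀ - a₂) < 0 :=
    div_neg_of_neg_of_pos (by linarith [hx₀.2]) (by linarith [hx₀.1])
  have hrx₀ : r ((x₀:ℝ):ℂ) = (((x₀ - b₂)/(x₀ - a₂) : ℝ) : ℂ) := hr_real x₀
  -- sequence approaching x₀ from above
  set y : ℕ → ℝ := fun k => c/((k:ℝ)+2) with hydef
  set g : ℕ → ℂ := fun k => ((x₀:ℝ):ℂ) + ((y k : ℝ):ℂ) * I with hgdef
  have hgU : ∀ k : ℕ, g k ∈ U := by
    intro k
    have hk2 : (0:ℝ) < (k:ℝ) + 2 := by positivity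
    have h1 : (0:ℝ) < c/((k:ℝ)+2) := by positivity
    have h2 : c/((k:ℝ)+2) < c := by
      rw [div_lt_iff₀ hk2]
      nlinarith
    have hgre : (g k).re = x₀ := by
      simp only [hgdef, Complex.add_re, Complex.mul_re, Complex.I_re, Complex.I_im,
        Complex.ofReal_re, Complex.ofReal_im]
      ring
    have hgim : (g k).im = c/((k:ℝ)+2) := by
      simp only [hgdef, hydef, Complex.add_im, Complex.mul_im, Complex.I_re, Complex.I_im,
        Complex.ofReal_re, Complex.ofReal_im]
      ring
    exact ⟨by rw [hgre]; exact hx₀ab.1, by rw [hgre]; exact hx₀ab.2,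
      by rw [hgim]; exact h1, by rw [hgim]; exact h2⟩
  have hgtend : Filter.Tendsto g Filter.atTop (nhds ((x₀:ℝ):ℂ)) := by
    have hy : Filter.Tendsto y Filter.atTop (nhds 0) := by
      apply Filter.Tendsto.div_atTop (tendsto_const_nhds)
      exact Filter.tendsto_atTop_add_const_right _ 2 tendsto_natCast_atTop_atTop
    have hyc : Filter.Tendsto (fun k : ℕ => ((y k : ℝ):ℂ)) Filter.atTop (nhds ((0:ℝ):ℂ)) :=
      Complex.continuous_ofReal.continuousAt.tendsto.comp hy
    have h2 := (hyc.mul_const I).const_add ((x₀:ℝ):ℂ)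
    simpa using h2
  have hrg : Filter.Tendsto (fun k => r (g k)) Filter.atTop
      (nhdsWithin (r ((x₀:ℝ):ℂ)) {ξ : ℂ | 0 ≤ ξ.im}) := by
    rw [tendsto_nhdsWithin_iff]
    constructor
    · have hden : ((x₀:ℝ):ℂ) - (a₂:ℂ) ≠ 0 := by
        rw [sub_ne_zero]
        intro hcontra
        have hxa : x₀ = a₂ := Complex.ofReal_inj.mp hcontra
        linarith [hx₀.1]
      exact (hr_contAt _ hden).tendsto.comp hgtend
    · refine Filter.Eventually.of_forall (fun k => him_r_nonneg _ ?_)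
      have := (hgU k).2.2.1
      exact this.le
  have hθg : Filter.Tendsto (fun k => θ (g k)) Filter.atTop (nhds Real.pi) := by
    have hre : (r ((x₀:ℝ):ℂ)).re < 0 := by rw [hrx₀, Complex.ofReal_re]; exact hρneg
    have him : (r ((x₀:ℝ):ℂ)).im = 0 := by rw [hrx₀]; exact Complex.ofReal_im _
    exact (Complex.tendsto_arg_nhdsWithin_im_nonneg_of_re_neg_of_im_zero hre him).comp hrg
  obtain ⟨k, hk⟩ := (hθg.eventually (eventually_gt_nhds hmπ)).exists
  -- identity theorem
  set W : Set ℂ := U ∩ θ ⁻¹' (Set.Ioi m) with hWdef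
  have hWopen : IsOpen W := by
    have hcont : ContinuousOn θ U := by
      intro z hz
      exact (hθ_contAt z (Or.inr (him_r_pos z hz.2.2.1).ne')).continuousWithinAt
    exact hcont.isOpen_inter_preimage hUopen isOpen_Ioi
  have hz₀W : g k ∈ W := ⟨hgU k, hk⟩
  have hFW : ∀ z ∈ W, F z = 0 := fun z hz => hW0 z hz.1 hz.2
  have hSconv : Convex ℝ S := by
    intro x hx y hy s t hs ht hst
    have him : (s • x + t • y).im = s * x.im + t * y.im := by
      simp only [Complex.add_im, Complex.real_smul, Complex.mul_im, Complex.ofReal_re,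
        Complex.ofReal_im]
      ring
    rcases eq_or_lt_of_le hs with hs0|hs0
    · have ht1 : t = 1 := by linarith
      constructor
      · rw [him, ← hs0, ht1]
        simpa using hy.1
      · rw [him, ← hs0, ht1]
        simpa using hy.2
    · constructor
      · rw [him]
        exact add_pos_of_pos_of_nonneg (mul_pos hs0 hx.1) (mul_nonneg ht hy.1.le)
      · rw [him]
        nlinarith [mul_lt_mul_of_pos_left hx.2 hs0, mul_le_mul_of_nonneg_left hy.2.le ht]
  have hEqS : Set.EqOn F 0 S := by
    apply (hd.analyticOnNhd hSopen).eqOn_zero_of_preconnected_of_eventuallyEq_zero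
      hSconv.isPreconnected (hUS (hgU k))
    filter_upwards [hWopen.mem_nhds hz₀W] with ξ hξ using hFW ξ hξ
  intro z hz
  haveI hne : (nhdsWithin z S).NeBot := mem_closure_iff_nhdsWithin_neBot.mp hz
  have h1 : Filter.Tendsto F (nhdsWithin z S) (nhds (F z)) := (hc z hz).mono subset_closure
  have h2 : Filter.Tendsto F (nhdsWithin z S) (nhds 0) := by
    apply Filter.Tendsto.congr' ?_ (tendsto_const_nhds (α := ℂ) (f := nhdsWithin z S))
    filter_upwards [self_mem_nhdsWithin] with ξ hξ using (hEqS hξ).symm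
  exact tendsto_nhds_unique h1 h2
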